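/- Fix D > 1 and a ≥ 0. Fix T > 0 and let η : [0, T] → ℝ be continuous and nondecreasing with η(0) = 0 and η(T) ≤ a. Define x_t = exp( ln(D) · e^{a − η(t)} ) for t ∈ [0, T]. Then for every t ∈ [0, T], x_t = x_T + ∫_{(t, T]} x_s · ln(x_s) dη(s), where the integral is the Lebesgue–Stieltjes integral with respect to the measure induced by η on [0, T]. -/

import Mathlib

open MeasureTheory Set

/-- For a continuous monotone `η` and `η t ≤ y`, the supremum `σ` of the sublevel set
`{s ∈ [t,T] : η s ≤ y}` is attained, bounds every point of the set, and satisfies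
`η σ = y` whenever `y ≤ η T`. -/
lemma sup_sublevel (η : StieltjesFunction ℝ) (hηc : Continuous η) {t T y : ℝ}
    (htT : t ≤ T) (hy : η t ≤ y) :
    ∃ σ ∈ Set.Icc t T, η σ ≤ y ∧ (∀ s ∈ Set.Icc t T, η s ≤ y → s ≤ σ) ∧
      (y ≤ η T → η σ = y) := by
  set S : Set ℝ := Icc t T ∩ η ⁻¹' (Iic y) with hS
  have hScl : IsClosed S := isClosed_Icc.inter (isClosed_Iic.preimage hηc)
  have hSne : S.Nonempty := ⟨t, ⟨le_rfl, htT⟩, hy⟩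
  have hSbdd : BddAbove S := ⟨T, fun s hs => hs.1.2⟩
  set σ := sSup S with hσ
  have hσS : σ ∈ S := hScl.csSup_mem hSne hSbdd
  have hbound : ∀ s ∈ Set.Icc t T, η s ≤ y → s ≤ σ := fun s hs hsy =>
    le_csSup hSbdd ⟨hs, hsy⟩
  refine ⟨σ, hσS.1, hσS.2, hbound, fun hyT => ?_⟩
  rcases eq_or_lt_of_le hyT with h | h
  · -- y = η T, so T ∈ S and σ = T
    have : T ≤ σ := hbound T ⟨htT, le_rfl⟩ h.ge
    have hσT : σ = T := le_antisymm hσS.1.2 this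
    rw [hσT, ← h]
  · -- y < η T : if η σ < y, continuity gives a contradiction
    by_contra hne
    have hlt : η σ < y := lt_of_le_of_ne hσS.2 hne
    have hσT : σ < T := by
      rcases lt_or_eq_of_le hσS.1.2 with h' | h'
      · exact h'
      · exact absurd (h' ▸ hlt) (not_lt.2 h.le)
    have hev : ∀ᶠ s in nhds σ, η s < y := (hηc.continuousAt).eventually_lt
      continuousAt_const hlt
    rcases Metric.eventually_nhds_iff.1 hev with ⟨ε, hε, hball⟩
    set s := min (σ + ε / 2) T with hs
    have hsσ : σ < s := lt_min (by linarith) hσT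
    have hsT : s ≤ T := min_le_right _ _
    have hst : t ≤ s := le_trans hσS.1.1 hsσ.le
    have : η s < y := by
      apply hball
      rw [Real.dist_eq, abs_lt]
      constructor <;> [linarith [hsσ]; linarith [min_le_left (σ + ε / 2) T]]
    exact absurd (hbound s ⟨hst, hsT⟩ this.le) (not_le.2 hsσ)

/-- The pushforward of the Lebesgue–Stieltjes measure of a continuous `η`, restricted to
`(t, T]`, under `η` itself, is Lebesgue measure on `(η t, η T]`. -/
lemma map_stieltjes (η : StieltjesFunction ℝ) (hηc : Continuous η) {t T : ℝ} (htT : t ≤ T) :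
    Measure.map η (η.measure.restrict (Set.Ioc t T)) =
      volume.restrict (Set.Ioc (η t) (η T)) := by
  have hmeas : Measurable η := η.mono.measurable
  have hμuniv : (Measure.map η (η.measure.restrict (Set.Ioc t T))) univ
      = ENNReal.ofReal (η T - η t) := by
    rw [Measure.map_apply hmeas MeasurableSet.univ, preimage_univ,
      Measure.restrict_apply MeasurableSet.univ, univ_inter, η.measure_Ioc]
  have hfin : IsFiniteMeasure (Measure.map η (η.measure.restrict (Set.Ioc t T))) :=
    ⟨by rw [hμuniv]; exact ENNReal.ofReal_lt_top⟩
  -- the null "flat" interval at level η t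
  obtain ⟨γ, hγmem, hγle, hγbound, -⟩ := sup_sublevel η hηc htT (le_refl (η t))
  have hγnull : η.measure (Ioc t γ) = 0 := by
    rw [η.measure_Ioc]
    have : η γ = η t := le_antisymm hγle (η.mono hγmem.1)
    simp [this]
  refine Measure.ext_of_Ioc_finite _ _ (by rw [hμuniv,
    Measure.restrict_apply MeasurableSet.univ, univ_inter, Real.volume_Ioc]) ?_
  intro c d hcd
  have hpre : MeasurableSet (η ⁻¹' Ioc c d) := hmeas measurableSet_Ioc
  rw [Measure.map_apply hmeas measurableSet_Ioc,
    Measure.restrict_apply hpre, Measure.restrict_apply measurableSet_Ioc,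
    Ioc_inter_Ioc, Real.volume_Ioc]
  set c' := max c (η t) with hc'
  set d' := min d (η T) with hd'
  set A : Set ℝ := η ⁻¹' Ioc c d ∩ Ioc t T with hA
  rcases le_or_gt d' c' with hdc | hcd'
  · -- degenerate case: both sides are 0
    have hAsub : A ⊆ Ioc t γ := by
      rintro s ⟨⟨hcs, hsd⟩, hts, hsT⟩
      have hsd' : η s ≤ d' := le_min hsd (η.mono hsT)
      have : η s ≤ η t := by
        rcases le_max_iff.1 (hsd'.trans hdc) with h | h
        · exact absurd h (not_le.2 hcs)
        · exact h
      exact ⟨hts, hγbound s ⟨hts.le, hsT⟩ this⟩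
    rw [measure_mono_null hAsub hγnull]
    rw [ENNReal.ofReal_eq_zero.2 (by linarith)]
  · -- main case
    have hd'T : d' ≤ η T := min_le_right _ _
    have hc'T : c' ≤ η T := hcd'.le.trans hd'T
    have htc' : η t ≤ c' := le_max_right _ _
    have htd' : η t ≤ d' := htc'.trans hcd'.le
    obtain ⟨α, hαmem, hαle, hαbound, hαeq⟩ := sup_sublevel η hηc htT htc'
    obtain ⟨β, hβmem, hβle, hβbound, hβeq⟩ := sup_sublevel η hηc htT htd'
    have hηα : η α = c' := hαeq hc'T
    have hηβ : η β = d' := hβeq hd'T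
    have h1 : Ioc α β ⊆ A := by
      rintro s ⟨hαs, hsβ⟩
      have hsT : s ≤ T := hsβ.trans hβmem.2
      have hts : t < s := lt_of_le_of_lt hαmem.1 hαs
      have hsd : η s ≤ d' := hηβ ▸ η.mono hsβ
      have hcs : c' < η s := by
        by_contra h
        exact absurd (hαbound s ⟨hts.le, hsT⟩ (not_lt.1 h)) (not_le.2 hαs)
      exact ⟨⟨lt_of_le_of_lt (le_max_left _ _) hcs, hsd.trans (min_le_left _ _)⟩, hts, hsT⟩
    have h2 : A ⊆ Ioc α β ∪ Ioc t γ := by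
      rintro s ⟨⟨hcs, hsd⟩, hts, hsT⟩
      have hsd' : η s ≤ d' := le_min hsd (η.mono hsT)
      rcases lt_or_ge c' (η s) with h | h
      · left
        refine ⟨?_, hβbound s ⟨hts.le, hsT⟩ hsd'⟩
        by_contra hsα
        exact absurd (hηα ▸ η.mono (not_lt.1 hsα)) (not_le.2 h)
      · right
        have : η s ≤ η t := by
          rcases le_max_iff.1 h with h' | h'
          · exact absurd h' (not_le.2 hcs)
          · exact h'
        exact ⟨hts, hγbound s ⟨hts.le, hsT⟩ this⟩
    have hub : η.measure A ≤ η.measure (Ioc α β) := by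
      calc η.measure A ≤ η.measure (Ioc α β ∪ Ioc t γ) := measure_mono h2
        _ ≤ η.measure (Ioc α β) + η.measure (Ioc t γ) := measure_union_le _ _
        _ = η.measure (Ioc α β) := by rw [hγnull, add_zero]
    have : η.measure A = η.measure (Ioc α β) := le_antisymm hub (measure_mono h1)
    rw [this, η.measure_Ioc, hηα, hηβ]

/-- Fix `D > 1`, `a ≥ 0`, `T > 0` and a continuous nondecreasing (Stieltjes)
function `η` with `η 0 = 0` and `η T ≤ a`. Setting `x_t = exp(ln D · e^{a − η t})`, for every
`t ∈ [0, T]` one has `x_t = x_T + ∫_{(t, T]} x_s · ln(x_s) dη(s)` (a Lebesgue–Stieltjes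
integral with respect to the measure induced by `η`). -/
theorem stmt_10 (D a T : ℝ) (hD : 1 < D) (ha : 0 ≤ a) (hT : 0 < T)
    (η : StieltjesFunction ℝ) (hηc : Continuous η) (hη0 : η 0 = 0) (hηT : η T ≤ a) :
    ∀ t ∈ Set.Icc 0 T,
      Real.exp (Real.log D * Real.exp (a - η t)) =
        Real.exp (Real.log D * Real.exp (a - η T)) +
          ∫ s in Set.Ioc t T,
            Real.exp (Real.log D * Real.exp (a - η s)) *
              Real.log (Real.exp (Real.log D * Real.exp (a - η s))) ∂η.measure := by
  intro t ht
  set F : ℝ → ℝ := fun u => Real.exp (Real.log D * Real.exp (a - u)) with hF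
  set g : ℝ → ℝ := fun u => F u * (Real.log D * Real.exp (a - u)) with hg
  have hmeas : Measurable η := η.mono.measurable
  have hgc : Continuous g := by fun_prop
  have htT : t ≤ T := ht.2
  have hηtT : η t ≤ η T := η.mono htT
  -- change of variables
  have hcov : (∫ s in Set.Ioc t T, g (η s) ∂η.measure)
      = ∫ u in Set.Ioc (η t) (η T), g u := by
    have := map_stieltjes η hηc htT
    calc (∫ s in Set.Ioc t T, g (η s) ∂η.measure)
        = ∫ u, g u ∂(Measure.map η (η.measure.restrict (Set.Ioc t T))) :=
          (integral_map hmeas.aemeasurable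
            (hgc.aestronglyMeasurable)).symm
      _ = ∫ u in Set.Ioc (η t) (η T), g u := by rw [this]
  -- FTC
  have hderiv : ∀ u, HasDerivAt F (-g u) u := by
    intro u
    have h1 : HasDerivAt (fun u : ℝ => a - u) (-1) u :=
      (hasDerivAt_id u).const_sub a
    have h2 : HasDerivAt (fun u : ℝ => Real.exp (a - u)) (Real.exp (a - u) * (-1)) u :=
      h1.exp
    have h3 : HasDerivAt (fun u : ℝ => Real.log D * Real.exp (a - u))
        (Real.log D * (Real.exp (a - u) * (-1))) u := h2.const_mul _
    have h4 := h3.exp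
    convert h4 using 1
    rw [hg, hF]; ring
  have hftc : ∫ u in (η t)..(η T), (fun u => -g u) u = F (η T) - F (η t) :=
    intervalIntegral.integral_eq_sub_of_hasDerivAt
      (fun u _ => hderiv u) ((hgc.neg).intervalIntegrable _ _)
  have hioc : ∫ u in Set.Ioc (η t) (η T), g u = F (η t) - F (η T) := by
    have := hftc
    rw [intervalIntegral.integral_of_le hηtT] at this
    simp only [integral_neg] at this
    linarith
  -- assemble
  have hint_eq : (∫ s in Set.Ioc t T, F (η s) * Real.log (F (η s)) ∂η.measure)
      = ∫ s in Set.Ioc t T, g (η s) ∂η.measure := by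
    refine integral_congr_ae (Filter.Eventually.of_forall fun s => ?_)
    rw [hg, hF]; simp only [Real.log_exp]
  show F (η t) = F (η T) + ∫ s in Set.Ioc t T, F (η s) * Real.log (F (η s)) ∂η.measure
  rw [hint_eq, hcov, hioc]; ring
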